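/- For any three points a, b, c ∈ ℝ², the two-dimensional Lebesgue measure of the triangle convexHull ℝ {a, b, c} equals |(b − a) × (c − a)| / 2, where u × v = u₁v₂ − u₂v₁ is the cross product of u, v ∈ ℝ². -/

import Mathlib

open MeasureTheory Pointwise

/-- The standard triangle in `ℝ × ℝ` as a convex hull. -/
lemma stdTriangle_eq :
    convexHull ℝ {((0:ℝ),(0:ℝ)), (1,0), (0,1)} =
      {p : ℝ × ℝ | 0 ≤ p.1 ∧ 0 ≤ p.2 ∧ p.1 + p.2 ≤ 1} := by
  apply Set.Subset.antisymm
  · apply convexHull_min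
    · rintro p (rfl | rfl | rfl) <;> norm_num
    · rintro ⟨x1, x2⟩ ⟨hx1, hx2, hx3⟩ ⟨y1, y2⟩ ⟨hy1, hy2, hy3⟩ s t hs ht hst
      have h : s • ((x1:ℝ), x2) + t • ((y1:ℝ), y2) = (s*x1 + t*y1, s*x2 + t*y2) := by
        simp only [Prod.smul_mk, smul_eq_mul, Prod.mk_add_mk]
      rw [h]
      simp only [Set.mem_setOf_eq] at hx3 hy3 ⊢
      refine ⟨by positivity, by positivity, by nlinarith⟩
  · rintro ⟨x, y⟩ ⟨hx, hy, hxy⟩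
    have hsum := (convex_convexHull ℝ {((0:ℝ),(0:ℝ)), (1,0), (0,1)}).sum_mem
      (t := Finset.univ) (w := ![1-x-y, x, y]) (z := ![((0:ℝ),(0:ℝ)), (1,0), (0,1)])
      (by intro i _; fin_cases i <;> simp <;> linarith)
      (by simp [Fin.sum_univ_three]; ring)
      (by intro i _; fin_cases i <;> exact subset_convexHull _ _ (by simp))
    convert hsum using 1
    simp [Fin.sum_univ_three, Prod.ext_iff]

lemma stdTriangle_volume :
    volume (convexHull ℝ {((0:ℝ),(0:ℝ)), (1,0), (0,1)}) = ENNReal.ofReal (1/2) := by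
  rw [stdTriangle_eq]
  set S : Set (ℝ × ℝ) := {p : ℝ × ℝ | 0 ≤ p.1 ∧ 0 ≤ p.2 ∧ p.1 + p.2 ≤ 1} with hS
  have hmeas : MeasurableSet S := by
    apply MeasurableSet.inter
    · exact measurableSet_le measurable_const measurable_fst
    · exact (measurableSet_le measurable_const measurable_snd).inter
        (measurableSet_le (measurable_fst.add measurable_snd) measurable_const)
  rw [show (volume : Measure (ℝ × ℝ)) = (volume : Measure ℝ).prod volume from rfl,
    Measure.prod_apply hmeas]
  have hslice : ∀ x : ℝ, volume (Prod.mk x ⁻¹' S) =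
      (Set.Icc (0:ℝ) 1).indicator (fun x => ENNReal.ofReal (1-x)) x := by
    intro x
    by_cases hx : x ∈ Set.Icc (0:ℝ) 1
    · have h1 : Prod.mk x ⁻¹' S = Set.Icc 0 (1-x) := by
        ext y
        simp only [hS, Set.mem_preimage, Set.mem_setOf_eq, Set.mem_Icc, Set.mem_Icc] at *
        constructor
        · rintro ⟨_, hy, hxy⟩; exact ⟨hy, by linarith⟩
        · rintro ⟨hy, hy1⟩; exact ⟨hx.1, hy, by linarith⟩
      rw [h1, Real.volume_Icc, Set.indicator_of_mem hx]
      norm_num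
    · have h1 : Prod.mk x ⁻¹' S = ∅ := by
        ext y
        simp only [Set.mem_Icc, not_and_or, not_le] at hx
        simp only [hS, Set.mem_preimage, Set.mem_setOf_eq, Set.mem_empty_iff_false,
          iff_false]
        intro hmem
        obtain ⟨h0, hy0, hxy⟩ := hmem
        rcases hx with h | h <;> linarith
      rw [h1, Set.indicator_of_notMem hx]
      simp
  simp_rw [hslice]
  rw [lintegral_indicator measurableSet_Icc]
  rw [← ofReal_integral_eq_lintegral_ofReal]
  · congr 1
    rw [MeasureTheory.integral_Icc_eq_integral_Ioc,
      ← intervalIntegral.integral_of_le (by norm_num : (0:ℝ) ≤ 1)]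
    rw [intervalIntegral.integral_sub intervalIntegrable_const
      intervalIntegral.intervalIntegrable_id, integral_id]
    norm_num
  · exact (continuous_const.sub continuous_id).integrableOn_Icc.mono_set (le_refl _)
  · filter_upwards [ae_restrict_mem measurableSet_Icc] with x hx
    simp only [Pi.zero_apply]
    linarith [hx.2]

theorem triangle_area_cross_product (a b c : ℝ × ℝ) :
    volume (convexHull ℝ {a, b, c}) =
      ENNReal.ofReal
        (|(b - a).1 * (c - a).2 - (b - a).2 * (c - a).1| / 2) := by
  set L : (ℝ × ℝ) →ₗ[ℝ] (ℝ × ℝ) :=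
    Matrix.toLin (Module.Basis.finTwoProd ℝ) (Module.Basis.finTwoProd ℝ)
      !![(b - a).1, (c - a).1; (b - a).2, (c - a).2] with hL
  have hLdet : LinearMap.det L = (b - a).1 * (c - a).2 - (b - a).2 * (c - a).1 := by
    rw [hL, LinearMap.det_toLin, Matrix.det_fin_two_of]; ring
  have himg : ({a, b, c} : Set (ℝ × ℝ)) = a +ᵥ (L '' {((0:ℝ),(0:ℝ)), (1,0), (0,1)}) := by
    have e0 : L ((0:ℝ),(0:ℝ)) = (0, 0) := by
      rw [hL, Matrix.toLin_finTwoProd_apply]; norm_num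
    have e1 : L ((1:ℝ),(0:ℝ)) = b - a := by
      rw [hL, Matrix.toLin_finTwoProd_apply]; simp [Prod.ext_iff]
    have e2 : L ((0:ℝ),(1:ℝ)) = c - a := by
      rw [hL, Matrix.toLin_finTwoProd_apply]; simp [Prod.ext_iff]
    rw [Set.image_insert_eq, Set.image_insert_eq, Set.image_singleton, e0, e1, e2]
    rw [Set.vadd_set_insert, Set.vadd_set_insert, Set.vadd_set_singleton]
    simp [vadd_eq_add, Prod.mk_zero_zero]
  rw [himg, convexHull_vadd, ← L.image_convexHull]
  rw [measure_vadd, Measure.addHaar_image_linearMap, stdTriangle_volume, hLdet,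
    ← ENNReal.ofReal_mul (abs_nonneg _)]
  congr 1
  ring
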